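/- Let n, r be natural numbers with r ≥ 1 and n ≥ 2r+2, and let J̃ be the antisymmetric n×n real matrix whose top-left 2r×2r block is J̄_{2r} and whose remaining entries are 0. Let V be a linear subspace of the antisymmetric n×n real matrices such that J̃ + v has rank 2r for every v ∈ V. Fix two distinct indices j₁, j₂ ∈ {2r+1, …, n}. Then the image of V under the linear map sending v to the pair of vectors (v_{1,j₁},…,v_{2r,j₁}, v_{1,j₂},…,v_{2r,j₂}) ∈ ℝ^{4r} (the j₁-th and j₂-th columns of v restricted to the first 2r rows) has dimension at most 2r. -/

import Mathlib

open Matrix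

/-- The 2×2 matrix `J = [[0,1],[-1,0]]`. -/
def Jmat : Matrix (Fin 2) (Fin 2) ℝ := !![0, 1; -1, 0]

/-- The `2r × 2r` block-diagonal matrix with `r` diagonal blocks equal to `J`. -/
def Jbar (r : ℕ) : Matrix (Fin (2 * r)) (Fin (2 * r)) ℝ :=
  Matrix.of fun i j =>
    if (i : ℕ) / 2 = (j : ℕ) / 2 then
      Jmat ⟨(i : ℕ) % 2, by omega⟩ ⟨(j : ℕ) % 2, by omega⟩
    else 0

/-- The antisymmetric `n × n` matrix whose top-left `2r × 2r` block is `J̄₂ᵣ` and whose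
remaining entries are `0`. -/
def Jtilde (n r : ℕ) : Matrix (Fin n) (Fin n) ℝ :=
  Matrix.of fun i j =>
    if hi : (i : ℕ) < 2 * r then
      if hj : (j : ℕ) < 2 * r then Jbar r ⟨(i : ℕ), hi⟩ ⟨(j : ℕ), hj⟩ else 0
    else 0

/-- The linear map sending a matrix to its `(i,j)` entry. -/
def entryLin (n : ℕ) (i j : Fin n) : Matrix (Fin n) (Fin n) ℝ →ₗ[ℝ] ℝ where
  toFun v := v i j
  map_add' _ _ := rfl
  map_smul' _ _ := rfl

def pairEquiv (r : ℕ) : Fin 2 × Fin r ≃ Fin (2 * r) where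
  toFun p := ⟨2 * (p.2 : ℕ) + (p.1 : ℕ), by have := p.1.2; have := p.2.2; omega⟩
  invFun i := (⟨(i : ℕ) % 2, by omega⟩, ⟨(i : ℕ) / 2, by have := i.2; omega⟩)
  left_inv p := by
    have := p.1.2; have := p.2.2
    ext <;> simp <;> omega
  right_inv i := by
    ext; simp; omega

lemma Jbar_eq (r : ℕ) :
    Jbar r = (blockDiagonal fun _ : Fin r => Jmat).submatrix (pairEquiv r).symm (pairEquiv r).symm := by
  ext i j
  have hi := i.2; have hj := j.2
  simp only [Jbar, Matrix.of_apply, submatrix_apply, pairEquiv, Equiv.coe_fn_symm_mk,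
    blockDiagonal_apply]
  by_cases h : (i : ℕ) / 2 = (j : ℕ) / 2
  · rw [if_pos h, if_pos (by ext; simpa using h)]
  · rw [if_neg h, if_neg (by intro hc; exact h (by simpa using congrArg Fin.val hc))]

lemma Jmat_mul_Jmat : Jmat * Jmat = -1 := by
  ext i j
  fin_cases i <;> fin_cases j <;>
    simp [Jmat, Matrix.mul_apply, Fin.sum_univ_two, Matrix.one_apply]

lemma Jmat_transpose : Jmatᵀ = -Jmat := by
  ext i j
  fin_cases i <;> fin_cases j <;> simp [Jmat]

lemma det_Jmat : Jmat.det = 1 := by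
  simp [Jmat, Matrix.det_fin_two_of]

lemma Jbar_mul_Jbar (r : ℕ) : Jbar r * Jbar r = -1 := by
  rw [Jbar_eq, submatrix_mul_equiv _ _ _ ((pairEquiv r).symm) _, ← blockDiagonal_mul]
  simp only [Jmat_mul_Jmat]
  rw [show (fun _ : Fin r => (-1 : Matrix (Fin 2) (Fin 2) ℝ))
      = -(1 : Fin r → Matrix (Fin 2) (Fin 2) ℝ) from rfl,
    blockDiagonal_neg, blockDiagonal_one]
  ext i j
  simp only [submatrix_apply, Matrix.neg_apply, one_apply, EmbeddingLike.apply_eq_iff_eq]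

lemma Jbar_transpose (r : ℕ) : (Jbar r)ᵀ = -(Jbar r) := by
  ext i j
  have hi := i.2; have hj := j.2
  simp only [transpose_apply, Jbar, Matrix.of_apply, Matrix.neg_apply]
  by_cases h : (i : ℕ) / 2 = (j : ℕ) / 2
  · rw [if_pos h.symm, if_pos h]
    have := congrFun (congrFun Jmat_transpose ⟨(i : ℕ) % 2, by omega⟩) ⟨(j : ℕ) % 2, by omega⟩
    simpa using this
  · rw [if_neg (fun hc => h hc.symm), if_neg h, neg_zero]

lemma det_Jbar (r : ℕ) : (Jbar r).det = 1 := by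
  rw [Jbar_eq, det_submatrix_equiv_self, det_blockDiagonal]
  simp [det_Jmat]

lemma Jbar_inv (r : ℕ) : (Jbar r)⁻¹ = -(Jbar r) := by
  apply inv_eq_right_inv
  rw [Matrix.mul_neg, Jbar_mul_Jbar]; simp

lemma adjugate_Jbar (r : ℕ) : (Jbar r).adjugate = -(Jbar r) := by
  have h := Matrix.inv_def (Jbar r)
  rw [det_Jbar] at h
  simpa using h.symm.trans (Jbar_inv r)

lemma sum_neg' {α : Type*} (s : Finset α) (f : α → ℝ) :
    (∑ i ∈ s, -f i) = -∑ i ∈ s, f i := by simp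

lemma vanish_limit {F : ℝ → ℝ} {U : Set ℝ} (hF : Continuous F) (hU : IsOpen U)
    (h0 : (0 : ℝ) ∈ U) (hz : ∀ t ∈ U, t ≠ 0 → F t = 0) : F 0 = 0 := by
  have h1 : Filter.Tendsto F (nhdsWithin 0 {(0 : ℝ)}ᶜ) (nhds (F 0)) :=
    (hF.tendsto 0).mono_left nhdsWithin_le_nhds
  have h2 : F =ᶠ[nhdsWithin 0 {(0 : ℝ)}ᶜ] fun _ => 0 := by
    filter_upwards [mem_nhdsWithin_of_mem_nhds (hU.mem_nhds h0), self_mem_nhdsWithin] with t htU ht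
    exact hz t htU ht
  exact tendsto_nhds_unique (h1.congr' h2) tendsto_const_nhds

set_option maxHeartbeats 1000000 in
lemma key (n r : ℕ) (hn : 2 * r + 2 ≤ n)
    (v : Matrix (Fin n) (Fin n) ℝ) (hv : vᵀ = -v)
    (hrk : ∀ t : ℝ, (Jtilde n r + t • v).rank ≤ 2 * r)
    (j₁ j₂ : Fin n) (hj₁ : 2 * r ≤ (j₁ : ℕ)) (hj₂ : 2 * r ≤ (j₂ : ℕ)) (hne : j₁ ≠ j₂) :
    ∑ i : Fin (2 * r), ∑ j : Fin (2 * r),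
      v ⟨(i : ℕ), by have := i.2; omega⟩ j₁ * Jbar r i j * v ⟨(j : ℕ), by have := j.2; omega⟩ j₂
      = 0 := by
  set f : Fin (2 * r) → Fin n := fun i => ⟨(i : ℕ), by have := i.2; omega⟩ with hf
  set g : Fin 2 → Fin n := ![j₁, j₂] with hg
  have hvskew : ∀ p q, v q p = -v p q := by
    intro p q
    have h := congrFun (congrFun hv q) p
    simp only [Matrix.transpose_apply, Matrix.neg_apply] at h
    linarith
  have hdiag : ∀ p, v p p = 0 := by
    intro p
    have := hvskew p p
    linarith
  set a : Matrix (Fin (2 * r)) (Fin (2 * r)) ℝ := Matrix.of fun i j => v (f i) (f j) with ha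
  set b : Matrix (Fin (2 * r)) (Fin 2) ℝ := Matrix.of fun i k => v (f i) (g k) with hb
  set c : Matrix (Fin 2) (Fin (2 * r)) ℝ := Matrix.of fun k i => v (g k) (f i) with hc
  set d : Matrix (Fin 2) (Fin 2) ℝ := Matrix.of fun k l => v (g k) (g l) with hd
  set x : Fin (2 * r) → ℝ := fun i => v (f i) j₁ with hx
  set y : Fin (2 * r) → ℝ := fun j => v (f j) j₂ with hy
  set A : ℝ → Matrix (Fin (2 * r)) (Fin (2 * r)) ℝ := fun t => Jbar r + t • a with hA
  set s : ℝ := v j₁ j₂ with hs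
  set P : ℝ → ℝ := fun t => ∑ i, ∑ j, x i * (A t).adjugate i j * y j with hP
  set F : ℝ → ℝ := fun t => s * (A t).det + t * P t with hF
  have hgg : ∀ l : Fin 2, 2 * r ≤ ((g l : Fin n) : ℕ) := by
    intro l; fin_cases l <;> simpa [hg]
  -- the top-left block of Jtilde is Jbar, the rest is zero
  have hJt1 : ∀ i j : Fin (2 * r), Jtilde n r (f i) (f j) = Jbar r i j := by
    intro i j
    have hi' : ((f i : Fin n) : ℕ) < 2 * r := i.2
    have hj' : ((f j : Fin n) : ℕ) < 2 * r := j.2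
    simp only [Jtilde, Matrix.of_apply, dif_pos hi', dif_pos hj']
    rfl
  have hJt2 : ∀ (p : Fin n) (q : Fin n), 2 * r ≤ (q : ℕ) → Jtilde n r p q = 0 := by
    intro p q hq
    simp only [Jtilde, Matrix.of_apply]
    split_ifs with h1 h2
    · omega
    · rfl
    · rfl
  have hJt3 : ∀ (p : Fin n) (q : Fin n), 2 * r ≤ (p : ℕ) → Jtilde n r p q = 0 := by
    intro p q hp
    simp only [Jtilde, Matrix.of_apply]
    rw [dif_neg (by omega)]
  -- block decomposition
  have hblock : ∀ t : ℝ, (Jtilde n r + t • v).submatrix (Sum.elim f g) (Sum.elim f g)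
      = fromBlocks (A t) (t • b) (t • c) (t • d) := by
    intro t
    ext i j
    cases i with
    | inl i =>
      cases j with
      | inl j =>
        simp only [submatrix_apply, Sum.elim_inl, fromBlocks_apply₁₁, Matrix.add_apply,
          Matrix.smul_apply, hA, Pi.add_apply, smul_eq_mul]
        rw [hJt1]
        rfl
      | inr l =>
        simp only [submatrix_apply, Sum.elim_inl, Sum.elim_inr, fromBlocks_apply₁₂,
          Matrix.add_apply, Matrix.smul_apply, smul_eq_mul]
        rw [hJt2 _ _ (hgg l)]
        simp [hb]
    | inr k =>
      cases j with
      | inl j =>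
        simp only [submatrix_apply, Sum.elim_inl, Sum.elim_inr, fromBlocks_apply₂₁,
          Matrix.add_apply, Matrix.smul_apply, smul_eq_mul]
        rw [hJt3 _ _ (hgg k)]
        simp [hc]
      | inr l =>
        simp only [submatrix_apply, Sum.elim_inr, fromBlocks_apply₂₂,
          Matrix.add_apply, Matrix.smul_apply, smul_eq_mul]
        rw [hJt3 _ _ (hgg k)]
        simp [hd]
  -- determinant of the (2r+2) submatrix vanishes
  have hdet0 : ∀ t : ℝ,
      ((Jtilde n r + t • v).submatrix (Sum.elim f g) (Sum.elim f g)).det = 0 := by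
    intro t
    by_contra h
    set X := Jtilde n r + t • v with hX
    set M := X.submatrix (Sum.elim f g) (Sum.elim f g) with hM
    have hU : IsUnit M := (isUnit_iff_isUnit_det M).2 (isUnit_iff_ne_zero.2 h)
    have h1 : M.rank = Fintype.card (Fin (2 * r) ⊕ Fin 2) := rank_of_isUnit M hU
    have hfac1 : ((1 : Matrix (Fin n) (Fin n) ℝ).submatrix (Sum.elim f g)
        ⇑(Equiv.refl (Fin n))) * X = X.submatrix (Sum.elim f g) id := by
      rw [one_submatrix_mul]
      rfl
    have hfac2 : (X.submatrix (Sum.elim f g) id) * ((1 : Matrix (Fin n) (Fin n) ℝ).submatrix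
        ⇑(Equiv.refl (Fin n)) (Sum.elim f g)) = M := by
      rw [mul_submatrix_one]
      simp [hM]
    have h2 : M.rank ≤ X.rank := by
      calc M.rank ≤ (X.submatrix (Sum.elim f g) id).rank := by
            rw [← hfac2]; exact rank_mul_le_left _ _
        _ ≤ X.rank := by rw [← hfac1]; exact rank_mul_le_right _ _
    have h3 : X.rank ≤ 2 * r := hrk t
    have hcard : Fintype.card (Fin (2 * r) ⊕ Fin 2) = 2 * r + 2 := by simp
    rw [h1, hcard] at h2
    omega
  -- continuity
  have hAc : Continuous A := continuous_const.add (continuous_id.smul continuous_const)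
  have hdetc : Continuous fun t => (A t).det := hAc.matrix_det
  have hPc : Continuous P := by
    apply continuous_finset_sum
    intro i _
    apply continuous_finset_sum
    intro j _
    exact (continuous_const.mul ((hAc.matrix_adjugate).matrix_elem i j)).mul continuous_const
  have hFc : Continuous F := (continuous_const.mul hdetc).add (continuous_id.mul hPc)
  have hA0 : A 0 = Jbar r := by simp [hA]
  have hdetA0 : (A 0).det = 1 := by rw [hA0, det_Jbar]
  set U : Set ℝ := {t | (A t).det ≠ 0} with hU
  have hUopen : IsOpen U := isOpen_compl_singleton.preimage hdetc
  have hU0 : (0 : ℝ) ∈ U := by simp [hU, hdetA0]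
  -- the central computation: for t in U, t * F t = 0
  have hmain : ∀ t ∈ U, t * F t = 0 := by
    intro t ht
    have htdet : IsUnit (A t).det := isUnit_iff_ne_zero.2 ht
    haveI : Invertible (A t) := (A t).invertibleOfIsUnitDet htdet
    have hd0 := hdet0 t
    rw [hblock t, det_fromBlocks₁₁] at hd0
    have hN : ((t • d) - (t • c) * ⅟(A t) * (t • b)).det = 0 := by
      rcases mul_eq_zero.1 hd0 with h | h
      · exact absurd h ht
      · exact h
    set K := (A t)⁻¹ with hK
    have hKof : ⅟(A t) = K := invOf_eq_nonsing_inv _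
    have haskew : aᵀ = -a := by
      ext i j
      simp only [ha, transpose_apply, Matrix.of_apply, Matrix.neg_apply]
      exact hvskew (f i) (f j)
    have hAskew : (A t)ᵀ = -(A t) := by
      simp only [hA, transpose_add, transpose_smul, Jbar_transpose, haskew, smul_neg]
      abel
    have hKskew : Kᵀ = -K := by
      have h1 : (-(A t))⁻¹ = -K := by
        apply inv_eq_right_inv
        rw [neg_mul_neg, mul_nonsing_inv _ htdet]
      rw [hK, transpose_nonsing_inv, hAskew, h1]
    have hKs : ∀ i j, K j i = -K i j := by
      intro i j
      have := congrFun (congrFun hKskew i) j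
      simpa [Matrix.transpose_apply, Matrix.neg_apply] using this
    set S : ℝ := ∑ i, ∑ j, x i * K i j * y j with hS
    -- compute the entries of N
    have hentry : ∀ (k l : Fin 2), ((t • c) * ⅟(A t) * (t • b)) k l
        = t ^ 2 * ∑ i, ∑ j, c k i * K i j * b j l := by
      intro k l
      rw [hKof]
      simp only [Matrix.mul_apply, Matrix.smul_apply, smul_eq_mul, Finset.sum_mul,
        Finset.mul_sum]
      rw [Finset.sum_comm]
      apply Finset.sum_congr rfl
      intro i _
      apply Finset.sum_congr rfl
      intro j _
      ring
    set S : ℝ := ∑ i, ∑ j, x i * K i j * y j with hS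
    have hQskew : ∀ u w : Fin (2 * r) → ℝ,
        (∑ i, ∑ j, w i * K i j * u j) = -(∑ i, ∑ j, u i * K i j * w j) := by
      intro u w
      rw [Finset.sum_comm, ← sum_neg']
      apply Finset.sum_congr rfl
      intro p _
      rw [← sum_neg']
      apply Finset.sum_congr rfl
      intro i _
      rw [hKs p i]
      ring
    have hb0 : ∀ i, b i 0 = x i := by intro i; simp [hb, hg, hx]
    have hb1 : ∀ i, b i 1 = y i := by intro i; simp [hb, hg, hy]
    have hc0 : ∀ i, c 0 i = -x i := by
      intro i
      simp only [hc, hg, Matrix.of_apply, Matrix.cons_val_zero, hx]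
      exact hvskew (f i) j₁
    have hc1 : ∀ i, c 1 i = -y i := by
      intro i
      simp only [hc, hg, Matrix.of_apply, Matrix.cons_val_one, Matrix.head_cons, hy]
      exact hvskew (f i) j₂
    have hd01 : d 0 1 = s := by simp [hd, hg, hs]
    have hd10 : d 1 0 = -s := by
      simp only [hd, hg, Matrix.of_apply, Matrix.cons_val_one, Matrix.head_cons,
        Matrix.cons_val_zero, hs]
      exact hvskew j₁ j₂
    have hd00 : d 0 0 = 0 := by simp [hd, hg]; exact hdiag j₁
    have hd11 : d 1 1 = 0 := by simp [hd, hg]; exact hdiag j₂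
    set N := (t • d) - (t • c) * ⅟(A t) * (t • b) with hNdef
    have hN00 : N 0 0 = 0 := by
      have h1 : (∑ i, ∑ j, c 0 i * K i j * b j 0) = -(∑ i, ∑ j, x i * K i j * x j) := by
        rw [← sum_neg']
        refine Finset.sum_congr rfl fun i _ => ?_
        rw [← sum_neg']
        refine Finset.sum_congr rfl fun j _ => ?_
        rw [hc0, hb0]; ring
      have h2 : (∑ i, ∑ j, x i * K i j * x j) = 0 := by
        have := hQskew x x
        linarith
      rw [hNdef]
      simp only [Matrix.sub_apply, Matrix.smul_apply, smul_eq_mul]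
      rw [hentry 0 0, h1, h2, hd00]
      ring
    have hN11 : N 1 1 = 0 := by
      have h1 : (∑ i, ∑ j, c 1 i * K i j * b j 1) = -(∑ i, ∑ j, y i * K i j * y j) := by
        rw [← sum_neg']
        refine Finset.sum_congr rfl fun i _ => ?_
        rw [← sum_neg']
        refine Finset.sum_congr rfl fun j _ => ?_
        rw [hc1, hb1]; ring
      have h2 : (∑ i, ∑ j, y i * K i j * y j) = 0 := by
        have := hQskew y y
        linarith
      rw [hNdef]
      simp only [Matrix.sub_apply, Matrix.smul_apply, smul_eq_mul]
      rw [hentry 1 1, h1, h2, hd11]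
      ring
    have hN01 : N 0 1 = t * s + t ^ 2 * S := by
      have h1 : (∑ i, ∑ j, c 0 i * K i j * b j 1) = -S := by
        rw [hS, ← sum_neg']
        refine Finset.sum_congr rfl fun i _ => ?_
        rw [← sum_neg']
        refine Finset.sum_congr rfl fun j _ => ?_
        rw [hc0, hb1]; ring
      rw [hNdef]
      simp only [Matrix.sub_apply, Matrix.smul_apply, smul_eq_mul]
      rw [hentry 0 1, h1, hd01]
      ring
    have hN10 : N 1 0 = -(t * s) - t ^ 2 * S := by
      have h1 : (∑ i, ∑ j, c 1 i * K i j * b j 0) = S := by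
        have h2 : (∑ i, ∑ j, c 1 i * K i j * b j 0) = -(∑ i, ∑ j, y i * K i j * x j) := by
          rw [← sum_neg']
          refine Finset.sum_congr rfl fun i _ => ?_
          rw [← sum_neg']
          refine Finset.sum_congr rfl fun j _ => ?_
          rw [hc1, hb0]; ring
        have h3 := hQskew x y
        rw [h2, h3, hS]; ring
      rw [hNdef]
      simp only [Matrix.sub_apply, Matrix.smul_apply, smul_eq_mul]
      rw [hentry 1 0, h1, hd10]
      ring
    have hts0 : t * s + t ^ 2 * S = 0 := by
      rw [Matrix.det_fin_two, hN00, hN11, hN01, hN10] at hN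
      nlinarith [hN]
    have hadj : (A t).adjugate = (A t).det • K := by
      have h1 := Matrix.inv_def (A t)
      calc (A t).adjugate = ((A t).det * Ring.inverse (A t).det) • (A t).adjugate := by
            rw [_root_.Ring.mul_inverse_cancel _ htdet, one_smul]
        _ = (A t).det • (Ring.inverse (A t).det • (A t).adjugate) := by rw [mul_smul]
        _ = (A t).det • K := by rw [hK, h1]
    have hPt : P t = (A t).det * S := by
      rw [hP, hS, Finset.mul_sum]
      refine Finset.sum_congr rfl fun i _ => ?_
      rw [Finset.mul_sum]
      refine Finset.sum_congr rfl fun j _ => ?_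
      rw [hadj]
      simp only [Matrix.smul_apply, smul_eq_mul]
      ring
    show t * (s * (A t).det + t * P t) = 0
    rw [hPt]
    linear_combination (A t).det * hts0
  -- conclude by limits
  have hFz : ∀ t ∈ U, t ≠ 0 → F t = 0 := by
    intro t ht htne
    exact (mul_eq_zero.1 (hmain t ht)).resolve_left htne
  have hs0 : s = 0 := by
    have h := vanish_limit hFc hUopen hU0 hFz
    rw [hF] at h
    simp only [hdetA0, mul_one, zero_mul, add_zero] at h
    exact h
  have hPz : ∀ t ∈ U, t ≠ 0 → P t = 0 := by
    intro t ht htne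
    have h := hFz t ht htne
    rw [hF, hs0] at h
    simp only [zero_mul, zero_add] at h
    exact (mul_eq_zero.1 h).resolve_left htne
  have hP0 : P 0 = 0 := vanish_limit hPc hUopen hU0 hPz
  have h2 : P 0 = -∑ i, ∑ j, x i * Jbar r i j * y j := by
    rw [hP]
    simp only [hA0, adjugate_Jbar, Matrix.neg_apply]
    rw [← sum_neg']
    refine Finset.sum_congr rfl fun i _ => ?_
    rw [← sum_neg']
    refine Finset.sum_congr rfl fun j _ => ?_
    ring
  have h3 : (∑ i, ∑ j, x i * Jbar r i j * y j) = 0 := by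
    rw [h2] at hP0
    linarith
  exact h3

def myι (r : ℕ) (i : Fin (2 * r)) : Fin (4 * r) := ⟨(i : ℕ), by have := i.2; omega⟩
def myκ (r : ℕ) (j : Fin (2 * r)) : Fin (4 * r) := ⟨(j : ℕ) + 2 * r, by have := j.2; omega⟩

def Bform (r : ℕ) : LinearMap.BilinForm ℝ (Fin (4 * r) → ℝ) :=
  LinearMap.mk₂ ℝ
    (fun u w => ∑ i, ∑ j,
      (u (myι r i) * Jbar r i j * w (myκ r j) + w (myι r i) * Jbar r i j * u (myκ r j)))
    (by
      intro u u' w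
      simp only [Pi.add_apply]
      rw [← Finset.sum_add_distrib]
      refine Finset.sum_congr rfl fun i _ => ?_
      rw [← Finset.sum_add_distrib]
      refine Finset.sum_congr rfl fun j _ => ?_
      ring)
    (by
      intro t u w
      simp only [Pi.smul_apply, smul_eq_mul]
      rw [Finset.mul_sum]
      refine Finset.sum_congr rfl fun i _ => ?_
      rw [Finset.mul_sum]
      refine Finset.sum_congr rfl fun j _ => ?_
      ring)
    (by
      intro u w w'
      simp only [Pi.add_apply]
      rw [← Finset.sum_add_distrib]
      refine Finset.sum_congr rfl fun i _ => ?_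
      rw [← Finset.sum_add_distrib]
      refine Finset.sum_congr rfl fun j _ => ?_
      ring)
    (by
      intro t u w
      simp only [Pi.smul_apply, smul_eq_mul]
      rw [Finset.mul_sum]
      refine Finset.sum_congr rfl fun i _ => ?_
      rw [Finset.mul_sum]
      refine Finset.sum_congr rfl fun j _ => ?_
      ring)

lemma Bform_apply (r : ℕ) (u w : Fin (4 * r) → ℝ) :
    Bform r u w = ∑ i, ∑ j,
      (u (myι r i) * Jbar r i j * w (myκ r j) + w (myι r i) * Jbar r i j * u (myκ r j)) := rfl

lemma Bform_symm (r : ℕ) (u w : Fin (4 * r) → ℝ) : Bform r u w = Bform r w u := by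
  rw [Bform_apply, Bform_apply]
  refine Finset.sum_congr rfl fun i _ => ?_
  refine Finset.sum_congr rfl fun j _ => ?_
  ring

lemma Bform_refl (r : ℕ) : (Bform r).IsRefl := by
  intro u w h
  rw [Bform_symm] at h
  exact h

lemma myι_ne_myκ (r : ℕ) (i j : Fin (2 * r)) : myι r i ≠ myκ r j := by
  intro h
  have := congrArg Fin.val h
  simp only [myι, myκ] at this
  have := i.2; have := j.2
  omega

lemma myκ_inj (r : ℕ) {i j : Fin (2 * r)} (h : myκ r i = myκ r j) : i = j := by
  have := congrArg Fin.val h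
  simp only [myκ] at this
  exact Fin.ext (by omega)

lemma myι_inj (r : ℕ) {i j : Fin (2 * r)} (h : myι r i = myι r j) : i = j := by
  have := congrArg Fin.val h
  simp only [myι] at this
  exact Fin.ext (by omega)

lemma Bform_nondeg (r : ℕ) : (Bform r).Nondegenerate := by
  refine (LinearMap.IsRefl.nondegenerate_iff_separatingLeft (Bform_refl r)).2 ?_
  intro u hu
  -- top part
  have htop : ∀ k, (∑ i, u (myι r i) * Jbar r i k) = 0 := by
    intro k
    have h := hu (Pi.single (myκ r k) 1)
    rw [Bform_apply] at h
    have e1 : ∀ i, (Pi.single (myκ r k) (1 : ℝ) : Fin (4 * r) → ℝ) (myι r i) = 0 := by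
      intro i
      apply Pi.single_eq_of_ne
      exact fun hc => myι_ne_myκ r i k hc
    have e2 : ∀ j, (Pi.single (myκ r k) (1 : ℝ) : Fin (4 * r) → ℝ) (myκ r j) = if j = k then 1 else 0 := by
      intro j
      by_cases hjk : j = k
      · subst hjk; simp
      · rw [if_neg hjk]
        apply Pi.single_eq_of_ne
        exact fun hc => hjk (myκ_inj r hc)
    simp only [e1, e2, mul_zero, zero_mul, add_zero, mul_ite, mul_one] at h
    simpa [Finset.sum_ite_eq'] using h
  have hbot : ∀ k, (∑ j, Jbar r k j * u (myκ r j)) = 0 := by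
    intro k
    have h := hu (Pi.single (myι r k) 1)
    rw [Bform_apply] at h
    have e1 : ∀ j, (Pi.single (myι r k) (1 : ℝ) : Fin (4 * r) → ℝ) (myκ r j) = 0 := by
      intro j
      apply Pi.single_eq_of_ne
      exact fun hc => myι_ne_myκ r k j hc.symm
    have e2 : ∀ i, (Pi.single (myι r k) (1 : ℝ) : Fin (4 * r) → ℝ) (myι r i) = if i = k then 1 else 0 := by
      intro i
      by_cases hik : i = k
      · subst hik; simp
      · rw [if_neg hik]
        apply Pi.single_eq_of_ne
        exact fun hc => hik (myι_inj r hc)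
    simp only [e1, e2, mul_zero, zero_mul, add_zero, zero_add, ite_mul, one_mul] at h
    rw [Finset.sum_comm] at h
    simpa [Finset.sum_ite_eq'] using h
  have hu1 : ∀ p, u (myι r p) = 0 := by
    intro p
    have hq : (∑ k, (∑ i, u (myι r i) * Jbar r i k) * Jbar r k p) = 0 := by
      simp [htop]
    have h2 : (∑ k, (∑ i, u (myι r i) * Jbar r i k) * Jbar r k p)
        = ∑ i, u (myι r i) * (Jbar r * Jbar r) i p := by
      simp only [Finset.sum_mul]
      rw [Finset.sum_comm]
      refine Finset.sum_congr rfl fun i _ => ?_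
      rw [Matrix.mul_apply, Finset.mul_sum]
      refine Finset.sum_congr rfl fun k _ => ?_
      ring
    rw [h2, Jbar_mul_Jbar] at hq
    simp only [Matrix.neg_apply, Matrix.one_apply, mul_neg, mul_ite, mul_one, mul_zero] at hq
    rw [sum_neg'] at hq
    simp only [neg_eq_zero] at hq
    simpa [Finset.sum_ite_eq'] using hq
  have hu2 : ∀ p, u (myκ r p) = 0 := by
    intro p
    have hq : (∑ k, Jbar r p k * (∑ j, Jbar r k j * u (myκ r j))) = 0 := by
      simp [hbot]
    have h2 : (∑ k, Jbar r p k * (∑ j, Jbar r k j * u (myκ r j)))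
        = ∑ j, (Jbar r * Jbar r) p j * u (myκ r j) := by
      simp only [Finset.mul_sum]
      rw [Finset.sum_comm]
      refine Finset.sum_congr rfl fun j _ => ?_
      rw [Matrix.mul_apply, Finset.sum_mul]
      refine Finset.sum_congr rfl fun k _ => ?_
      ring
    rw [h2, Jbar_mul_Jbar] at hq
    simp only [Matrix.neg_apply, Matrix.one_apply, neg_mul, ite_mul, one_mul, zero_mul] at hq
    rw [sum_neg'] at hq
    simp only [neg_eq_zero] at hq
    simpa [Finset.sum_ite_eq] using hq
  funext m
  rcases lt_or_ge (m : ℕ) (2 * r) with hm | hm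
  · have : m = myι r ⟨(m : ℕ), hm⟩ := by
      apply Fin.ext; simp [myι]
    rw [this]
    exact hu1 _
  · have : m = myκ r ⟨(m : ℕ) - 2 * r, by have := m.2; omega⟩ := by
      apply Fin.ext; simp [myκ]; omega
    rw [this]
    exact hu2 _

open Module in
lemma final_dim (r : ℕ) (W : Submodule ℝ (Fin (4 * r) → ℝ))
    (hiso : ∀ u ∈ W, ∀ w ∈ W, Bform r u w = 0) :
    Module.finrank ℝ W ≤ 2 * r := by
  have hle : W ≤ (Bform r).orthogonal W := by
    intro u hu
    intro w hw
    exact hiso w hw u hu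
  have horth := LinearMap.BilinForm.finrank_orthogonal (Bform_nondeg r) W
  have hmono : finrank ℝ W ≤ finrank ℝ ((Bform r).orthogonal W) := Submodule.finrank_mono hle
  have hE : finrank ℝ (Fin (4 * r) → ℝ) = 4 * r := by
    simp [Module.finrank_pi]
  have hWle : finrank ℝ W ≤ finrank ℝ (Fin (4 * r) → ℝ) := W.finrank_le
  omega

def finIncl {n r : ℕ} (h : 2 * r ≤ n) (i : Fin (2 * r)) : Fin n :=
  ⟨(i : ℕ), lt_of_lt_of_le i.2 h⟩

lemma iso_step (n r : ℕ) (hle : 2 * r ≤ n) (j₁ j₂ : Fin n)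
    (V : Submodule ℝ (Matrix (Fin n) (Fin n) ℝ))
    (key' : ∀ z ∈ V, (∑ i : Fin (2 * r), ∑ j : Fin (2 * r),
      z (finIncl hle i) j₁ * Jbar r i j * z (finIncl hle j) j₂) = 0)
    (φ : Matrix (Fin n) (Fin n) ℝ →ₗ[ℝ] (Fin (4 * r) → ℝ))
    (hφ1 : ∀ z (i : Fin (2 * r)), φ z (myι r i) = z (finIncl hle i) j₁)
    (hφ2 : ∀ z (j : Fin (2 * r)), φ z (myκ r j) = z (finIncl hle j) j₂) :
    ∀ u ∈ V.map φ, ∀ w ∈ V.map φ, Bform r u w = 0 := by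
  rintro u hu w hw
  rw [Submodule.mem_map] at hu hw
  obtain ⟨v, hv, rfl⟩ := hu
  obtain ⟨v', hv', rfl⟩ := hw
  have h1 := key' v hv
  have h2 := key' v' hv'
  have h3 := key' (v + v') (V.add_mem hv hv')
  simp only [Matrix.add_apply] at h3
  have hB : Bform r (φ v) (φ v') = ∑ i : Fin (2 * r), ∑ j : Fin (2 * r),
      (v (finIncl hle i) j₁ * Jbar r i j * v' (finIncl hle j) j₂
        + v' (finIncl hle i) j₁ * Jbar r i j * v (finIncl hle j) j₂) := by
    rw [Bform_apply]
    refine Finset.sum_congr rfl fun i _ => Finset.sum_congr rfl fun j _ => ?_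
    rw [hφ1 v i, hφ1 v' i, hφ2 v j, hφ2 v' j]
  have hexp : (∑ i : Fin (2 * r), ∑ j : Fin (2 * r),
      (v (finIncl hle i) j₁ + v' (finIncl hle i) j₁) * Jbar r i j
        * (v (finIncl hle j) j₂ + v' (finIncl hle j) j₂))
      = (∑ i : Fin (2 * r), ∑ j : Fin (2 * r),
          v (finIncl hle i) j₁ * Jbar r i j * v (finIncl hle j) j₂)
        + (∑ i : Fin (2 * r), ∑ j : Fin (2 * r),
          v' (finIncl hle i) j₁ * Jbar r i j * v' (finIncl hle j) j₂)
        + (∑ i : Fin (2 * r), ∑ j : Fin (2 * r),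
          (v (finIncl hle i) j₁ * Jbar r i j * v' (finIncl hle j) j₂
            + v' (finIncl hle i) j₁ * Jbar r i j * v (finIncl hle j) j₂)) := by
    rw [← Finset.sum_add_distrib, ← Finset.sum_add_distrib]
    refine Finset.sum_congr rfl fun i _ => ?_
    rw [← Finset.sum_add_distrib, ← Finset.sum_add_distrib]
    refine Finset.sum_congr rfl fun j _ => ?_
    ring
  rw [hB]
  rw [hexp] at h3
  linarith


/-- with `J̃ + v` of rank `2r` for all `v` in a linear subspace `V` of
antisymmetric matrices, and `j₁ ≠ j₂` two indices among `2r+1, …, n` (1-based), the image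
of `V` under `v ↦ (v_{1,j₁},…,v_{2r,j₁}, v_{1,j₂},…,v_{2r,j₂}) ∈ ℝ^{4r}` has dimension at
most `2r`. -/
theorem stmt_10 (n r : ℕ) (hr : 1 ≤ r) (hn : 2 * r + 2 ≤ n)
    (V : Submodule ℝ (Matrix (Fin n) (Fin n) ℝ))
    (hanti : ∀ v ∈ V, vᵀ = -v)
    (hrank : ∀ v ∈ V, (Jtilde n r + v).rank = 2 * r)
    (j₁ j₂ : Fin n) (hj₁ : 2 * r ≤ (j₁ : ℕ)) (hj₂ : 2 * r ≤ (j₂ : ℕ)) (hne : j₁ ≠ j₂) :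
    Module.finrank ℝ (V.map (LinearMap.pi fun x : Fin (4 * r) =>
      if hx : (x : ℕ) < 2 * r then entryLin n ⟨(x : ℕ), by omega⟩ j₁
      else entryLin n ⟨(x : ℕ) - 2 * r, by have := x.2; omega⟩ j₂)) ≤ 2 * r := by
  have hle : 2 * r ≤ n := by omega
  apply final_dim
  refine iso_step n r hle j₁ j₂ V ?_ _ ?_ ?_
  · intro z hz
    exact key n r hn z (hanti z hz)
      (fun t => le_of_eq (hrank (t • z) (V.smul_mem t hz))) j₁ j₂ hj₁ hj₂ hne
  · intro z i
    rw [LinearMap.pi_apply, dif_pos (show ((myι r i : Fin (4 * r)) : ℕ) < 2 * r from i.2)]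
    rfl
  · intro z j
    rw [LinearMap.pi_apply,
      dif_neg (show ¬((myκ r j : Fin (4 * r)) : ℕ) < 2 * r by simp [myκ])]
    simp only [entryLin, LinearMap.coe_mk, AddHom.coe_mk, myκ, Nat.add_sub_cancel]
    rfl
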